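/- Let D be a nonempty compact convex subset of ℝ^{d×m}, let F : ℝ^{d×m} → ℝ be convex and differentiable, and let C_F ≥ 0 be a curvature bound for F on D. Define the Frank–Wolfe iterates by choosing W⁰ ∈ D and, for t = 0, 1, 2, …, setting W^{t+1} = (1 − γ^t) W^t + γ^t S^t, where γ^t = 2/(t+2) and S^t ∈ argmin_{S ∈ D} ⟨S, ∇F(W^t)⟩. Then for every t ≥ 1, F(W^t) − F(W*) ≤ 2 C_F / (t+2), where W* is any minimizer of F over D. -/

import Mathlib

open Matrix MeasureTheory ProbabilityTheory

attribute [local instance] Matrix.frobeniusNormedAddCommGroup Matrix.frobeniusNormedSpace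

noncomputable section

/-- The Frobenius inner product `⟨A, B⟩ = trace (Aᵀ * B)` on `ℝ^{d×m}`. -/
def frobInner {d m : ℕ} (A B : Matrix (Fin d) (Fin m) ℝ) : ℝ := (Aᵀ * B).trace

/-- The Frobenius norm `‖A‖_F = √⟨A, A⟩`. -/
def frobNorm {d m : ℕ} (A : Matrix (Fin d) (Fin m) ℝ) : ℝ := Real.sqrt (frobInner A A)

/-- `C` is a curvature bound for a differentiable `F` (with gradient `gradF`) on a convex set
`D` if `F(W + γ(S − W)) ≤ F(W) + γ⟨S − W, ∇F(W)⟩ + (γ²/2) C` for all `W, S ∈ D`, `γ ∈ [0,1]`. -/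
def IsCurvatureBound {d m : ℕ} (F : Matrix (Fin d) (Fin m) ℝ → ℝ)
    (gradF : Matrix (Fin d) (Fin m) ℝ → Matrix (Fin d) (Fin m) ℝ)
    (D : Set (Matrix (Fin d) (Fin m) ℝ)) (C : ℝ) : Prop :=
  ∀ W ∈ D, ∀ S ∈ D, ∀ γ : ℝ, γ ∈ Set.Icc (0 : ℝ) 1 →
    F (W + γ • (S - W)) ≤ F W + γ * frobInner (S - W) (gradF W) + γ ^ 2 / 2 * C

/-- The singular values of a rectangular real matrix `A`: square roots of the
eigenvalues of `Aᵀ A` (listed with multiplicity, indexed by `Fin m`). -/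
def singularValues {d m : ℕ} (A : Matrix (Fin d) (Fin m) ℝ) : Fin m → ℝ := fun i =>
  Real.sqrt ((show (Aᵀ * A).IsHermitian by
    rw [← Matrix.conjTranspose_eq_transpose_of_trivial]
    exact Matrix.isHermitian_conjTranspose_mul_self A).eigenvalues i)

/-- The trace norm (nuclear norm): the sum of the singular values. -/
def traceNorm {d m : ℕ} (A : Matrix (Fin d) (Fin m) ℝ) : ℝ := ∑ i, singularValues A i

/-- The largest singular value, `σ₁(A) = sup { uᵀ A v : ‖u‖₂ = ‖v‖₂ = 1 }`. -/
def sigma1 {d m : ℕ} (A : Matrix (Fin d) (Fin m) ℝ) : ℝ :=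
  sSup {r : ℝ | ∃ (u : Fin d → ℝ) (v : Fin m → ℝ),
    ∑ i, u i ^ 2 = 1 ∧ ∑ j, v j ^ 2 = 1 ∧ r = ∑ i, ∑ j, u i * A i j * v j}

/-- The second-largest singular value (when `σ₁` has multiplicity 1): the largest
singular value strictly below `σ₁`. -/
def sigma2 {d m : ℕ} (A : Matrix (Fin d) (Fin m) ℝ) : ℝ :=
  sSup {r : ℝ | (∃ i, singularValues A i = r) ∧ r < sigma1 A}

/-- The Euclidean norm on `ℝ^k`. -/
def enorm2 {k : ℕ} (v : Fin k → ℝ) : ℝ := Real.sqrt (∑ i, v i ^ 2)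

/-- Normalization of a vector in the Euclidean norm. -/
def normalize' {k : ℕ} (v : Fin k → ℝ) : Fin k → ℝ := (enorm2 v)⁻¹ • v

/-- Power method iterates: `b₀ = b`, `b_{k+1} = A b_k / ‖A b_k‖₂`. -/
def powerIter {k : ℕ} (A : Matrix (Fin k) (Fin k) ℝ) (b : Fin k → ℝ) : ℕ → Fin k → ℝ
  | 0 => b
  | n + 1 => normalize' (A.mulVec (powerIter A b n))

/-- Rayleigh quotient `vᵀ A v`. -/
def rayleigh {k : ℕ} (A : Matrix (Fin k) (Fin k) ℝ) (v : Fin k → ℝ) : ℝ :=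
  ∑ i, v i * A.mulVec v i

/-- Alternating power iterations producing `v_k`:
`u_{k+1} = A v_k / ‖A v_k‖₂`, `v_{k+1} = Aᵀ u_{k+1} / ‖Aᵀ u_{k+1}‖₂`. -/
def altIter {d m : ℕ} (A : Matrix (Fin d) (Fin m) ℝ) (v0 : Fin m → ℝ) : ℕ → Fin m → ℝ
  | 0 => v0
  | k + 1 => normalize' (Aᵀ.mulVec (normalize' (A.mulVec (altIter A v0 k))))

instance matrixMeasurableSpace {d m : ℕ} : MeasurableSpace (Matrix (Fin d) (Fin m) ℝ) :=
  inferInstanceAs (MeasurableSpace (Fin d → Fin m → ℝ))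


lemma frobInner_sub_left {d m : ℕ} (A B C : Matrix (Fin d) (Fin m) ℝ) :
    frobInner (A - B) C = frobInner A C - frobInner B C := by
  simp [frobInner, Matrix.transpose_sub, Matrix.sub_mul]

lemma frobInner_comm {d m : ℕ} (A B : Matrix (Fin d) (Fin m) ℝ) :
    frobInner A B = frobInner B A := by
  rw [frobInner, frobInner, ← Matrix.trace_transpose (Aᵀ * B)]
  simp [Matrix.transpose_mul]

lemma grad_ineq {d m : ℕ} (F : Matrix (Fin d) (Fin m) ℝ → ℝ)
    (gradF : Matrix (Fin d) (Fin m) ℝ → Matrix (Fin d) (Fin m) ℝ)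
    (hFconv : ConvexOn ℝ Set.univ F) (hFdiff : Differentiable ℝ F)
    (hgrad : ∀ W Δ, fderiv ℝ F W Δ = frobInner (gradF W) Δ)
    (W V : Matrix (Fin d) (Fin m) ℝ) :
    F W + frobInner (gradF W) (V - W) ≤ F V := by
  set Δ := V - W with hΔ
  have hinner : HasDerivAt (fun γ : ℝ => W + γ • Δ) Δ 0 := by
    exact (((hasDerivAt_id (0 : ℝ)).smul_const Δ).const_add W).congr_deriv (one_smul ℝ Δ)
  have hφ : HasDerivAt (fun γ : ℝ => F (W + γ • Δ)) (fderiv ℝ F W Δ) 0 := by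
    have := (hFdiff (W + (0 : ℝ) • Δ)).hasFDerivAt.comp_hasDerivAt 0 hinner
    simp only [zero_smul, add_zero] at this
    exact this
  have hslope : Filter.Tendsto (slope (fun γ : ℝ => F (W + γ • Δ)) 0)
      (nhdsWithin 0 (Set.Ioi 0)) (nhds (fderiv ℝ F W Δ)) :=
    ((hasDerivAt_iff_tendsto_slope).1 hφ).mono_left
      (nhdsWithin_mono _ (fun x hx => ne_of_gt hx))
  have hle : fderiv ℝ F W Δ ≤ F V - F W := by
    refine le_of_tendsto hslope ?_
    filter_upwards [Ioo_mem_nhdsGT_of_mem (Set.mem_Ico.2 ⟨le_refl (0:ℝ), one_pos⟩)]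
      with γ hγ
    obtain ⟨hγ0, hγ1⟩ := hγ
    have hconv := hFconv.2 (Set.mem_univ W) (Set.mem_univ V)
      (by linarith : (0:ℝ) ≤ 1 - γ) (le_of_lt hγ0) (by ring)
    have heq : W + γ • Δ = (1 - γ) • W + γ • V := by
      rw [hΔ]; module
    have : F (W + γ • Δ) ≤ (1 - γ) * F W + γ * F V := by
      rw [heq]; simpa [smul_eq_mul] using hconv
    rw [slope_def_field, zero_smul, add_zero, sub_zero, div_le_iff₀ hγ0]
    nlinarith
  have := hgrad W Δ
  linarith [hle, this.symm.le, this.le]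

/-- Sublinear convergence of the (deterministic) Frank–Wolfe algorithm
with step size `γ^t = 2/(t+2)` and exact linear minimization oracle. -/
theorem frank_wolfe_sublinear_convergence {d m : ℕ}
    (D : Set (Matrix (Fin d) (Fin m) ℝ))
    (hDne : D.Nonempty) (hDcp : IsCompact D) (hDcv : Convex ℝ D)
    (F : Matrix (Fin d) (Fin m) ℝ → ℝ)
    (gradF : Matrix (Fin d) (Fin m) ℝ → Matrix (Fin d) (Fin m) ℝ)
    (hFconv : ConvexOn ℝ Set.univ F)
    (hFdiff : Differentiable ℝ F)
    (hgrad : ∀ W Δ, fderiv ℝ F W Δ = frobInner (gradF W) Δ)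
    (C_F : ℝ) (hC : 0 ≤ C_F) (hcurv : IsCurvatureBound F gradF D C_F)
    (W S : ℕ → Matrix (Fin d) (Fin m) ℝ)
    (hW0 : W 0 ∈ D)
    (hSmem : ∀ t, S t ∈ D)
    (hSopt : ∀ t, ∀ S' ∈ D, frobInner (S t) (gradF (W t)) ≤ frobInner S' (gradF (W t)))
    (hrec : ∀ t : ℕ, W (t + 1) =
      (1 - 2 / ((t : ℝ) + 2)) • W t + (2 / ((t : ℝ) + 2)) • S t)
    (Wstar : Matrix (Fin d) (Fin m) ℝ) (hWstarD : Wstar ∈ D)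
    (hWstarmin : ∀ V ∈ D, F Wstar ≤ F V) :
    ∀ t : ℕ, 1 ≤ t → F (W t) - F Wstar ≤ 2 * C_F / ((t : ℝ) + 2) := by
  -- membership of iterates
  have hγmem : ∀ t : ℕ, (2 / ((t : ℝ) + 2)) ∈ Set.Icc (0:ℝ) 1 := by
    intro t
    constructor
    · positivity
    · rw [div_le_one (by positivity)]
      have : (0:ℝ) ≤ (t:ℝ) := Nat.cast_nonneg t
      linarith
  have hWmem : ∀ t, W t ∈ D := by
    intro t
    induction t with
    | zero => exact hW0
    | succ t ih =>
      rw [hrec t]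
      exact hDcv ih (hSmem t) (by linarith [(hγmem t).2, (hγmem t).1])
        (hγmem t).1 (by ring)
  -- the per-step recurrence
  have hstep : ∀ t : ℕ, F (W (t+1)) - F Wstar ≤
      (1 - 2 / ((t : ℝ) + 2)) * (F (W t) - F Wstar)
        + (2 / ((t : ℝ) + 2)) ^ 2 / 2 * C_F := by
    intro t
    set γ : ℝ := 2 / ((t : ℝ) + 2) with hγ
    have hWt1 : W (t+1) = W t + γ • (S t - W t) := by
      rw [hrec t]; module
    have hcb := hcurv (W t) (hWmem t) (S t) (hSmem t) γ (hγmem t)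
    rw [← hWt1] at hcb
    have hgap : frobInner (S t - W t) (gradF (W t)) ≤ F Wstar - F (W t) := by
      have h1 : frobInner (S t) (gradF (W t)) ≤ frobInner Wstar (gradF (W t)) :=
        hSopt t Wstar hWstarD
      have h2 := grad_ineq F gradF hFconv hFdiff hgrad (W t) Wstar
      rw [frobInner_comm] at h2
      rw [frobInner_sub_left] at h2 ⊢
      linarith
    have hγ0 : 0 ≤ γ := (hγmem t).1
    nlinarith [mul_le_mul_of_nonneg_left hgap hγ0]
  -- induction
  intro t ht
  induction t with
  | zero => omega
  | succ t ih =>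
    rcases Nat.eq_or_lt_of_le ht with h1 | h1
    · -- t + 1 = 1, i.e. t = 0
      have ht0 : t = 0 := by omega
      subst ht0
      have := hstep 0
      norm_num at this ⊢
      linarith [hWstarmin (W 0) hW0]
    · have ht' : 1 ≤ t := by omega
      have ih' := ih ht'
      have hs := hstep t
      have htpos : (0:ℝ) < (t:ℝ) + 2 := by positivity
      have ht3 : (0:ℝ) < (t:ℝ) + 1 + 2 := by positivity
      push_cast
      have key : (1 - 2 / ((t : ℝ) + 2)) * (2 * C_F / ((t : ℝ) + 2))
          + (2 / ((t : ℝ) + 2)) ^ 2 / 2 * C_F ≤ 2 * C_F / ((t : ℝ) + 1 + 2) := by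
        have hL : (1 - 2/((t:ℝ)+2))*(2*C_F/((t:ℝ)+2)) + (2/((t:ℝ)+2))^2/2*C_F
            = 2*C_F*((t:ℝ)+1)/((t:ℝ)+2)^2 := by field_simp; ring
        rw [hL, div_le_div_iff₀ (by positivity) ht3]
        nlinarith
      have hmono : (1 - 2 / ((t : ℝ) + 2)) * (F (W t) - F Wstar) ≤
          (1 - 2 / ((t : ℝ) + 2)) * (2 * C_F / ((t : ℝ) + 2)) := by
        apply mul_le_mul_of_nonneg_left ih'
        have h2 : 2 / ((t:ℝ)+2) ≤ 1 := (hγmem t).2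
        linarith
      linarith
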